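/- arXiv:1102.1516 — 2 statements merged into one kernel-verified Lean document; each statement's English description precedes it below -/
import Mathlib

section
/- In a tensor algebra over a field, modding out a two-sided ideal generated by a suitable quadratic element preserves non-divisibility on the right: if ξ = Σ b_{ij} x_i x_j is homogeneous of odd degree N with b_{ij} ≠ 0 iff b_{ji} ≠ 0, I the two-sided ideal generated by ξ, and u = Σ a_i x_i a nonzero homogeneous element of degree M, then for any w in the tensor algebra, w·u ∈ I if and only if w ∈ I. -/
open Finsupp MonoidAlgebra

section helpers
variable {F : Type*} [Field F] {k : ℕ}

local notation "W" => FreeMonoid (Fin k)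
local notation "A" => MonoidAlgebra F (FreeMonoid (Fin k))

noncomputable def Dr (i : Fin k) (f : A) : A :=
  MonoidAlgebra.ofCoeff (Finsupp.comapDomain (· * FreeMonoid.of i) f.coeff (Function.Injective.injOn (mul_left_injective _)))

lemma Dr_apply (i : Fin k) (f : A) (l : W) : (Dr i f).coeff l = f.coeff (l * FreeMonoid.of i) := rfl

lemma Dr_add (i : Fin k) (f g : A) : Dr i (f + g) = Dr i f + Dr i g := by
  ext l; rfl

lemma Dr_smul (i : Fin k) (c : F) (f : A) : Dr i (c • f) = c • Dr i f := by
  ext l; rfl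

lemma Dr_zero (i : Fin k) : Dr i (0 : A) = 0 := by ext l; simp [Dr_apply]

lemma Dr_sum {α : Type*} (i : Fin k) (s : Finset α) (g : α → A) :
    Dr i (∑ t ∈ s, g t) = ∑ t ∈ s, Dr i (g t) := by
  ext l
  rw [MonoidAlgebra.coeff_sum, Finsupp.finset_sum_apply, Dr_apply, MonoidAlgebra.coeff_sum,
    Finsupp.finset_sum_apply]
  simp only [Dr_apply]

lemma concat_ne_concat {i j : Fin k} (h : j ≠ i) (m₁ m₂ : W) :
    m₁ * FreeMonoid.of j ≠ m₂ * FreeMonoid.of i := by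
  intro hc
  have h1 : (FreeMonoid.toList (m₁ * FreeMonoid.of j)).getLast? = some j := by
    rw [FreeMonoid.toList_mul, FreeMonoid.toList_of]; exact List.getLast?_concat
  have h2 : (FreeMonoid.toList (m₂ * FreeMonoid.of i)).getLast? = some i := by
    rw [FreeMonoid.toList_mul, FreeMonoid.toList_of]; exact List.getLast?_concat
  rw [hc, h2] at h1
  exact h (Option.some_injective _ h1.symm)

lemma concat_ne_one (m : W) (i : Fin k) : m * FreeMonoid.of i ≠ 1 := by
  intro h
  have := congrArg FreeMonoid.length h
  simp [FreeMonoid.length_mul] at this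

lemma Dr_single_concat (i : Fin k) (m : W) (c : F) :
    Dr i (MonoidAlgebra.single (m * FreeMonoid.of i) c) = MonoidAlgebra.single m c := by
  ext l
  rw [Dr_apply]
  rcases eq_or_ne l m with rfl | h
  · simp
  · have h1 : (m * FreeMonoid.of i) ≠ (l * FreeMonoid.of i) :=
      fun hc => h (mul_left_injective _ hc).symm
    rw [MonoidAlgebra.coeff_single, MonoidAlgebra.coeff_single, Finsupp.single_eq_of_ne' h1,
      Finsupp.single_eq_of_ne' (Ne.symm h)]

lemma Dr_single_of_ne (i : Fin k) (m : W) (c : F) (h : ∀ m', m ≠ m' * FreeMonoid.of i) :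
    Dr i (MonoidAlgebra.single m c) = 0 := by
  ext l
  rw [Dr_apply, MonoidAlgebra.coeff_single, Finsupp.single_eq_of_ne' (fun hc => h l hc),
    MonoidAlgebra.coeff_zero, Finsupp.coe_zero, Pi.zero_apply]

-- product rule
lemma Dr_mul (i : Fin k) (f g : A) :
    Dr i (f * g) = f * Dr i g + (g.coeff 1) • Dr i f := by
  classical
  induction g using MonoidAlgebra.induction_linear with
  | zero => simp [Dr_zero]
  | add g1 g2 ih1 ih2 =>
      rw [mul_add, Dr_add, ih1, ih2, Dr_add, mul_add, MonoidAlgebra.coeff_add, Finsupp.add_apply, add_smul]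
      abel
  | single m β =>
      induction f using MonoidAlgebra.induction_linear with
      | zero => simp [Dr_zero]
      | add f1 f2 ih1 ih2 =>
          rw [add_mul, Dr_add, ih1, ih2, Dr_add, add_mul, smul_add]
          abel
      | single l α =>
          rcases List.eq_nil_or_concat (FreeMonoid.toList m) with hm | ⟨m', j, hm⟩
          · have hm1 : m = 1 := by
              have := congrArg FreeMonoid.ofList hm
              simpa using this
            subst hm1
            rw [Dr_single_of_ne i 1 β (fun m' => (concat_ne_one m' i).symm)]
            simp only [mul_zero, zero_add]
            rw [MonoidAlgebra.single_mul_single, mul_one, MonoidAlgebra.coeff_single, Finsupp.single_eq_same]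
            ext l'
            rw [Dr_apply, MonoidAlgebra.coeff_smul, Finsupp.smul_apply, Dr_apply,
              MonoidAlgebra.coeff_single, MonoidAlgebra.coeff_single, Finsupp.single_apply,
              Finsupp.single_apply]
            split <;> simp [mul_comm]
          · have hm1 : m = FreeMonoid.ofList m' * FreeMonoid.of j := by
              have := congrArg FreeMonoid.ofList hm
              simpa [FreeMonoid.ofList_append] using this
            subst hm1
            rw [MonoidAlgebra.single_mul_single]
            rcases eq_or_ne j i with rfl | hj
            · rw [← mul_assoc, Dr_single_concat, Dr_single_concat,
                MonoidAlgebra.single_mul_single]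
              rw [MonoidAlgebra.coeff_single, Finsupp.single_eq_of_ne' (concat_ne_one _ _), zero_smul, add_zero]
            · rw [Dr_single_of_ne i _ _ (fun m'' => by
                  rw [← mul_assoc]; exact concat_ne_concat hj _ _),
                Dr_single_of_ne i _ _ (fun m'' => concat_ne_concat hj _ _),
                MonoidAlgebra.coeff_single, Finsupp.single_eq_of_ne' (concat_ne_one _ _), mul_zero, zero_smul, add_zero]

end helpers
section grading
variable {F : Type*} [Field F] {k : ℕ}
local notation "W" => FreeMonoid (Fin k)
local notation "A" => MonoidAlgebra F (FreeMonoid (Fin k))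

noncomputable def projL (m : ℕ) (f : A) : A :=
  MonoidAlgebra.ofCoeff (Finsupp.filter (fun l => FreeMonoid.length l = m) f.coeff)

lemma projL_apply (m : ℕ) (f : A) (l : W) :
    (projL m f).coeff l = if FreeMonoid.length l = m then f.coeff l else 0 :=
  Finsupp.filter_apply _ f.coeff l

lemma projL_add (m : ℕ) (f g : A) : projL m (f + g) = projL m f + projL m g := by
  ext l
  rw [MonoidAlgebra.coeff_add, Finsupp.add_apply, projL_apply, projL_apply, projL_apply]
  split
  · rfl
  · simp

lemma projL_smul (m : ℕ) (c : F) (f : A) : projL m (c • f) = c • projL m f := by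
  ext l
  rw [MonoidAlgebra.coeff_smul, Finsupp.smul_apply, projL_apply, projL_apply,
    MonoidAlgebra.coeff_smul, Finsupp.smul_apply]
  split
  · rfl
  · simp

lemma projL_sum {α : Type*} (m : ℕ) (s : Finset α) (g : α → A) :
    projL m (∑ t ∈ s, g t) = ∑ t ∈ s, projL m (g t) := by
  ext l
  rw [MonoidAlgebra.coeff_sum, Finsupp.finset_sum_apply, projL_apply, MonoidAlgebra.coeff_sum,
    Finsupp.finset_sum_apply]
  simp only [projL_apply]
  split <;> simp_all

lemma projL_eq_self {m : ℕ} {f : A} (h : ∀ l ∈ f.coeff.support, FreeMonoid.length l = m) :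
    projL m f = f := by
  ext l
  rw [projL_apply]
  split
  · rfl
  · rcases eq_or_ne (f.coeff l) 0 with h0 | h0
    · exact h0.symm
    · exact absurd (h l (Finsupp.mem_support_iff.mpr h0)) (by assumption)

lemma projL_eq_zero {m : ℕ} {f : A} (h : ∀ l ∈ f.coeff.support, FreeMonoid.length l ≠ m) :
    projL m f = 0 := by
  ext l
  rw [projL_apply]
  split
  · rcases eq_or_ne (f.coeff l) 0 with h0 | h0
    · simpa using h0
    · exact absurd (by assumption) (h l (Finsupp.mem_support_iff.mpr h0))
  · rfl

lemma projL_decompose {K : ℕ} {f : A} (h : ∀ l ∈ f.coeff.support, FreeMonoid.length l < K) :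
    ∑ m ∈ Finset.range K, projL m f = f := by
  ext l
  rw [MonoidAlgebra.coeff_sum, Finsupp.finset_sum_apply]
  simp only [projL_apply]
  rcases eq_or_ne (f.coeff l) 0 with h0 | h0
  · simp [h0]
  · rw [Finset.sum_ite_eq (Finset.range K) (FreeMonoid.length l) (fun _ => f.coeff l)]
    simp [h l (Finsupp.mem_support_iff.mpr h0)]

noncomputable def truncL (n : ℕ) (f : A) : A := ∑ m ∈ Finset.range (n + 1), projL m f

lemma truncL_apply (n : ℕ) (f : A) (l : W) :
    (truncL n f).coeff l = if FreeMonoid.length l ≤ n then f.coeff l else 0 := by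
  rw [truncL, MonoidAlgebra.coeff_sum, Finsupp.finset_sum_apply]
  simp only [projL_apply]
  rcases le_or_gt (FreeMonoid.length l) n with h | h
  · rw [Finset.sum_ite_eq (Finset.range (n+1)) (FreeMonoid.length l) (fun _ => f.coeff l)]
    simp [Nat.lt_succ_of_le h, h]
  · rw [if_neg (by omega)]
    apply Finset.sum_eq_zero
    intro m hm
    rw [if_neg]
    simp only [Finset.mem_range] at hm
    omega

lemma truncL_add (n : ℕ) (f g : A) : truncL n (f + g) = truncL n f + truncL n g := by
  ext l
  rw [MonoidAlgebra.coeff_add, Finsupp.add_apply, truncL_apply, truncL_apply, truncL_apply]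
  split
  · rfl
  · simp

lemma truncL_smul (n : ℕ) (c : F) (f : A) : truncL n (c • f) = c • truncL n f := by
  ext l
  rw [MonoidAlgebra.coeff_smul, Finsupp.smul_apply, truncL_apply, truncL_apply,
    MonoidAlgebra.coeff_smul, Finsupp.smul_apply]
  split
  · rfl
  · simp

lemma truncL_eq_self {n : ℕ} {f : A} (h : ∀ l ∈ f.coeff.support, FreeMonoid.length l ≤ n) :
    truncL n f = f := by
  ext l
  rw [truncL_apply]
  split
  · rfl
  · rcases eq_or_ne (f.coeff l) 0 with h0 | h0
    · exact h0.symm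
    · exact absurd (h l (Finsupp.mem_support_iff.mpr h0)) (by assumption)

lemma truncL_eq_zero {n : ℕ} {f : A} (h : ∀ l ∈ f.coeff.support, n < FreeMonoid.length l) :
    truncL n f = 0 := by
  ext l
  rw [truncL_apply]
  split
  · rcases eq_or_ne (f.coeff l) 0 with h0 | h0
    · simpa using h0
    · have := h l (Finsupp.mem_support_iff.mpr h0); omega
  · rfl

lemma support_truncL_le {n : ℕ} {f : A} : ∀ l ∈ (truncL n f).coeff.support, FreeMonoid.length l ≤ n := by
  intro l hl
  rw [Finsupp.mem_support_iff, truncL_apply] at hl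
  by_contra h
  exact hl (if_neg h)

lemma support_sub_truncL {n : ℕ} {f : A} :
    ∀ l ∈ (f - truncL n f).coeff.support, n < FreeMonoid.length l := by
  intro l hl
  rw [Finsupp.mem_support_iff, MonoidAlgebra.coeff_sub, Finsupp.sub_apply, truncL_apply] at hl
  by_contra h
  push_neg at h
  rw [if_pos h, sub_self] at hl
  exact hl rfl

lemma exists_of_mem_support_mul {f g : A} {l : W} (h : l ∈ (f * g).coeff.support) :
    ∃ x ∈ f.coeff.support, ∃ y ∈ g.coeff.support, x * y = l := by
  classical
  exact Finset.mem_mul.mp (MonoidAlgebra.support_coeff_mul_subset f g h)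

lemma len_eq_of_mul {f g : A} {a c : ℕ} (hf : ∀ l ∈ f.coeff.support, FreeMonoid.length l = a)
    (hg : ∀ l ∈ g.coeff.support, FreeMonoid.length l = c) :
    ∀ l ∈ (f * g).coeff.support, FreeMonoid.length l = a + c := by
  intro l hl
  obtain ⟨x, hx, y, hy, rfl⟩ := exists_of_mem_support_mul hl
  rw [FreeMonoid.length_mul, hf x hx, hg y hy]

lemma projL_zero (m : ℕ) : projL m (0 : A) = 0 := by
  ext l; rw [projL_apply]; split <;> rfl

lemma support_projL {m : ℕ} {f : A} : ∀ l ∈ (projL m f).coeff.support, FreeMonoid.length l = m := by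
  intro l hl
  rw [Finsupp.mem_support_iff, projL_apply] at hl
  by_contra h
  exact hl (if_neg h)

lemma len_le_of_mul {f g : A} {a c : ℕ} (hf : ∀ l ∈ f.coeff.support, FreeMonoid.length l ≤ a)
    (hg : ∀ l ∈ g.coeff.support, FreeMonoid.length l ≤ c) :
    ∀ l ∈ (f * g).coeff.support, FreeMonoid.length l ≤ a + c := by
  intro l hl
  obtain ⟨x, hx, y, hy, rfl⟩ := exists_of_mem_support_mul hl
  rw [FreeMonoid.length_mul]
  exact Nat.add_le_add (hf x hx) (hg y hy)

lemma len_ge_of_mul {f g : A} {a c : ℕ} (hf : ∀ l ∈ f.coeff.support, a ≤ FreeMonoid.length l)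
    (hg : ∀ l ∈ g.coeff.support, c ≤ FreeMonoid.length l) :
    ∀ l ∈ (f * g).coeff.support, a + c ≤ FreeMonoid.length l := by
  intro l hl
  obtain ⟨x, hx, y, hy, rfl⟩ := exists_of_mem_support_mul hl
  rw [FreeMonoid.length_mul]
  exact Nat.add_le_add (hf x hx) (hg y hy)

end grading
section main
variable {F : Type*} [Field F] {k : ℕ}
local notation "W" => FreeMonoid (Fin k)
local notation "A" => MonoidAlgebra F (FreeMonoid (Fin k))

noncomputable def Xg (i : Fin k) : A := MonoidAlgebra.single (FreeMonoid.of i) 1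

lemma Xg_mul (i j : Fin k) :
    (Xg i * Xg j : A) = MonoidAlgebra.single (FreeMonoid.of i * FreeMonoid.of j) 1 := by
  rw [Xg, Xg, MonoidAlgebra.single_mul_single, one_mul]

lemma Dr_Xg (i j : Fin k) : Dr i (Xg j : A) = if j = i then 1 else 0 := by
  rcases eq_or_ne j i with rfl | h
  · rw [if_pos rfl, Xg, show FreeMonoid.of j = 1 * FreeMonoid.of j from (one_mul _).symm,
      Dr_single_concat, MonoidAlgebra.one_def]
  · rw [if_neg h, Xg]
    exact Dr_single_of_ne i _ _ (fun m' => by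
      rw [show FreeMonoid.of j = 1 * FreeMonoid.of j from (one_mul _).symm]
      exact concat_ne_concat h _ _)

lemma Dr_Xg_mul (i m j : Fin k) :
    Dr i (Xg m * Xg j : A) = if j = i then Xg m else 0 := by
  rw [Xg_mul]
  rcases eq_or_ne j i with rfl | h
  · rw [if_pos rfl, Dr_single_concat, Xg]
  · rw [if_neg h]
    exact Dr_single_of_ne i _ _ (fun m'' => concat_ne_concat h _ _)

lemma eval_lin_of (c : Fin k → F) (i : Fin k) :
    (∑ j : Fin k, c j • Xg j : A).coeff (FreeMonoid.of i) = c i := by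
  classical
  rw [MonoidAlgebra.coeff_sum, Finsupp.finset_sum_apply]
  have h : ∀ j : Fin k, (c j • Xg j : A).coeff (FreeMonoid.of i)
      = if j = i then c j else 0 := by
    intro j
    rw [MonoidAlgebra.coeff_smul, Finsupp.smul_apply, Xg, MonoidAlgebra.coeff_single,
      Finsupp.single_apply]
    rcases eq_or_ne j i with rfl | h
    · simp
    · rw [if_neg (fun hc => h (FreeMonoid.of_injective hc)), if_neg h, smul_zero]
  simp only [h]
  rw [Finset.sum_ite_eq' Finset.univ i c]
  simp

lemma eval_lin_one (c : Fin k → F) : (∑ j : Fin k, c j • Xg j : A).coeff 1 = 0 := by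
  rw [MonoidAlgebra.coeff_sum, Finsupp.finset_sum_apply]
  apply Finset.sum_eq_zero
  intro j _
  rw [MonoidAlgebra.coeff_smul, Finsupp.smul_apply, Xg, MonoidAlgebra.coeff_single,
    Finsupp.single_eq_of_ne', smul_zero]
  intro hc
  have := congrArg FreeMonoid.length hc
  simp at this

lemma lin_support (c : Fin k → F) :
    ∀ l ∈ (∑ j : Fin k, c j • Xg j : A).coeff.support, FreeMonoid.length l = 1 := by
  intro l hl
  rw [Finsupp.mem_support_iff] at hl
  by_contra h
  apply hl
  rw [MonoidAlgebra.coeff_sum, Finsupp.finset_sum_apply]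
  apply Finset.sum_eq_zero
  intro j _
  rw [MonoidAlgebra.coeff_smul, Finsupp.smul_apply, Xg, MonoidAlgebra.coeff_single,
    Finsupp.single_eq_of_ne', smul_zero]
  intro hc
  apply h
  rw [← hc]
  rfl

lemma lin_ne_zero (c : Fin k → F) (i : Fin k) (h : c i ≠ 0) :
    (∑ j : Fin k, c j • Xg j : A) ≠ 0 := by
  intro hc
  apply h
  rw [← eval_lin_of c i, hc, MonoidAlgebra.coeff_zero, Finsupp.coe_zero, Pi.zero_apply]

lemma lin_exists_ne (c : Fin k → F) (h : (∑ j : Fin k, c j • Xg j : A) ≠ 0) :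
    ∃ i, c i ≠ 0 := by
  by_contra hc
  push_neg at hc
  exact h (Finset.sum_eq_zero (fun j _ => by rw [hc j, zero_smul]))

end main
section ideal
variable {F : Type*} [Field F] {k : ℕ}
local notation "W" => FreeMonoid (Fin k)
local notation "A" => MonoidAlgebra F (FreeMonoid (Fin k))

lemma supp_xi {b : Fin k → Fin k → F} {ξ : A}
    (hξ : ξ = ∑ i : Fin k, ∑ j : Fin k, b i j • (Xg i * Xg j)) :
    ∀ l ∈ ξ.coeff.support, FreeMonoid.length l = 2 := by
  intro l hl
  rw [Finsupp.mem_support_iff] at hl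
  by_contra h
  apply hl
  rw [hξ, MonoidAlgebra.coeff_sum, Finsupp.finset_sum_apply]
  apply Finset.sum_eq_zero
  intro i _
  rw [MonoidAlgebra.coeff_sum, Finsupp.finset_sum_apply]
  apply Finset.sum_eq_zero
  intro j _
  rw [MonoidAlgebra.coeff_smul, Finsupp.smul_apply, Xg_mul, MonoidAlgebra.coeff_single,
    Finsupp.single_eq_of_ne', smul_zero]
  intro hc
  apply h
  rw [← hc, FreeMonoid.length_mul, FreeMonoid.length_of, FreeMonoid.length_of]

lemma I_mul {ξ : A} {I : Submodule F A}
    (hI : I = Submodule.span F {x : A | ∃ v w : A, x = v * ξ * w}) :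
    ∀ x ∈ I, ∀ y : A, x * y ∈ I := by
  subst hI
  intro x hx y
  induction hx using Submodule.span_induction with
  | mem x hx => obtain ⟨v, w, rfl⟩ := hx
                exact Submodule.subset_span ⟨v, w * y, by rw [mul_assoc, mul_assoc]⟩
  | zero => rw [zero_mul]; exact Submodule.zero_mem _
  | add x y' hx hy ihx ihy => rw [add_mul]; exact Submodule.add_mem _ ihx ihy
  | smul c x hx ih => rw [smul_mul_assoc]; exact Submodule.smul_mem _ c ih

lemma I_proj {b : Fin k → Fin k → F} {ξ : A}
    (hξ : ξ = ∑ i : Fin k, ∑ j : Fin k, b i j • (Xg i * Xg j))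
    {I : Submodule F A}
    (hI : I = Submodule.span F {x : A | ∃ v w : A, x = v * ξ * w}) :
    ∀ x ∈ I, ∀ m : ℕ, projL m x ∈ I := by
  have hξ2 := supp_xi hξ
  intro x hx
  rw [hI] at hx ⊢
  induction hx using Submodule.span_induction with
  | zero => intro m; rw [projL_zero]; exact Submodule.zero_mem _
  | add x y hx hy ihx ihy =>
      intro m; rw [projL_add]; exact Submodule.add_mem _ (ihx m) (ihy m)
  | smul c x hx ih =>
      intro m; rw [projL_smul]; exact Submodule.smul_mem _ c (ih m)
  | mem x hx =>
      obtain ⟨p, q, rfl⟩ := hx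
      intro m
      set Kp := (p.coeff.support.sup FreeMonoid.length) + 1 with hKp
      set Kq := (q.coeff.support.sup FreeMonoid.length) + 1 with hKq
      have hp : p = ∑ a ∈ Finset.range Kp, projL a p :=
        (projL_decompose (fun l hl => Nat.lt_succ_of_le (Finset.le_sup hl))).symm
      have hq : q = ∑ c ∈ Finset.range Kq, projL c q :=
        (projL_decompose (fun l hl => Nat.lt_succ_of_le (Finset.le_sup hl))).symm
      have expand : p * ξ * q
          = ∑ a ∈ Finset.range Kp, ∑ c ∈ Finset.range Kq, projL a p * ξ * projL c q := by
        conv_lhs => rw [hp, hq]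
        rw [Finset.sum_mul, Finset.sum_mul]
        apply Finset.sum_congr rfl
        intro a _
        rw [Finset.mul_sum]
      rw [expand, projL_sum]
      apply Submodule.sum_mem
      intro a _
      rw [projL_sum]
      apply Submodule.sum_mem
      intro c _
      have hsupp : ∀ l ∈ (projL a p * ξ * projL c q).coeff.support,
          FreeMonoid.length l = a + 2 + c :=
        len_eq_of_mul (len_eq_of_mul support_projL hξ2) support_projL
      rcases eq_or_ne (a + 2 + c) m with he | he
      · rw [projL_eq_self (by rw [he] at hsupp; exact hsupp)]
        exact Submodule.subset_span ⟨projL a p, projL c q, rfl⟩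
      · rw [projL_eq_zero (fun l hl => by rw [hsupp l hl]; exact he)]
        exact Submodule.zero_mem _

lemma I_trunc {b : Fin k → Fin k → F} {ξ : A}
    (hξ : ξ = ∑ i : Fin k, ∑ j : Fin k, b i j • (Xg i * Xg j))
    {I : Submodule F A}
    (hI : I = Submodule.span F {x : A | ∃ v w : A, x = v * ξ * w}) :
    ∀ x ∈ I, ∀ n : ℕ, truncL n x ∈ I := by
  intro x hx n
  rw [truncL]
  exact Submodule.sum_mem _ (fun m _ => I_proj hξ hI x hx m)

lemma I_low {b : Fin k → Fin k → F} {ξ : A}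
    (hξ : ξ = ∑ i : Fin k, ∑ j : Fin k, b i j • (Xg i * Xg j))
    {I : Submodule F A}
    (hI : I = Submodule.span F {x : A | ∃ v w : A, x = v * ξ * w}) :
    ∀ x ∈ I, ∀ l : W, FreeMonoid.length l < 2 → x.coeff l = 0 := by
  have hξ2 := supp_xi hξ
  subst hI
  intro x hx
  induction hx using Submodule.span_induction with
  | zero => intro l _; rfl
  | add x y hx hy ihx ihy =>
      intro l hl
      rw [MonoidAlgebra.coeff_add, Finsupp.add_apply, ihx l hl, ihy l hl, add_zero]
  | smul c x hx ih =>
      intro l hl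
      rw [MonoidAlgebra.coeff_smul, Finsupp.smul_apply, ih l hl, smul_zero]
  | mem x hx =>
      obtain ⟨p, q, rfl⟩ := hx
      intro l hl
      rw [← Finsupp.notMem_support_iff]
      intro hmem
      have h2 : ∀ l' ∈ (p * ξ * q).coeff.support, 2 ≤ FreeMonoid.length l' := by
        have h1 : ∀ l' ∈ (p * ξ).coeff.support, 0 + 2 ≤ FreeMonoid.length l' :=
          len_ge_of_mul (fun _ _ => Nat.zero_le _) (fun l' hl' => (hξ2 l' hl').ge)
        have := len_ge_of_mul (f := p * ξ) (g := q) (a := 2) (c := 0)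
          (fun l' hl' => by simpa using h1 l' hl') (fun _ _ => Nat.zero_le _)
        simpa using this
      exact absurd (h2 l hmem) (by omega)

lemma trunc_mul_lin {f g : A} (d : ℕ) (hg : ∀ l ∈ g.coeff.support, FreeMonoid.length l = 1) :
    truncL (d + 1) (f * g) = truncL d f * g := by
  have hsplit : f * g = truncL d f * g + (f - truncL d f) * g := by
    rw [← add_mul, add_sub_cancel]
  rw [hsplit, truncL_add]
  have h1 : truncL (d + 1) (truncL d f * g) = truncL d f * g :=
    truncL_eq_self (len_le_of_mul support_truncL_le (fun l hl => (hg l hl).le))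
  have h2 : truncL (d + 1) ((f - truncL d f) * g) = 0 := by
    apply truncL_eq_zero
    have := len_ge_of_mul (f := f - truncL d f) (g := g) (a := d + 1) (c := 1)
      (fun l hl => support_sub_truncL l hl) (fun l hl => (hg l hl).ge)
    intro l hl
    have := this l hl
    omega
  rw [h1, h2, add_zero]

end ideal
section mainthm
variable {F : Type*} [Field F] {k : ℕ}
local notation "W" => FreeMonoid (Fin k)
local notation "A" => MonoidAlgebra F (FreeMonoid (Fin k))

theorem main_ma (deg : Fin k → ℤ) (N : ℤ) (hN : Odd N)
    (b : Fin k → Fin k → F)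
    (hsupp : ∀ i j, b i j ≠ 0 ↔ b j i ≠ 0)
    (hbdeg : ∀ i j, b i j ≠ 0 → deg i + deg j = N)
    (ξ : A) (hξ : ξ = ∑ i : Fin k, ∑ j : Fin k, b i j • (Xg i * Xg j))
    (hξne : ξ ≠ 0)
    (I : Submodule F A)
    (hI : I = Submodule.span F {x : A | ∃ v w : A, x = v * ξ * w}) :
    ∀ n : ℕ, ∀ (M' : ℤ) (a' : Fin k → F), (∀ i, a' i ≠ 0 → deg i = M') → (∃ i, a' i ≠ 0) →
      ∀ w : A, (∀ l ∈ w.coeff.support, FreeMonoid.length l ≤ n) →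
      w * (∑ i : Fin k, a' i • Xg i) ∈ I → w ∈ I := by
  -- preliminary computations
  have hξ1 : ξ.coeff 1 = 0 := by
    rw [← Finsupp.notMem_support_iff]
    intro h
    have := supp_xi hξ 1 h
    rw [FreeMonoid.length_one] at this
    exact two_ne_zero this.symm
  have hDξ : ∀ i, Dr i ξ = ∑ m : Fin k, b m i • Xg m := by
    intro i
    rw [hξ, Dr_sum]
    apply Finset.sum_congr rfl
    intro m _
    rw [Dr_sum]
    simp only [Dr_smul, Dr_Xg_mul]
    have h : ∀ j : Fin k, b m j • (if j = i then (Xg m : A) else 0)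
        = if j = i then b m j • Xg m else 0 := by
      intro j; split <;> simp
    simp only [h]
    rw [Finset.sum_ite_eq' Finset.univ i (fun j => b m j • (Xg m : A))]
    simp
  -- the key dichotomy: there is always an index i* with ξD i* ≠ 0 and a' i* = 0
  have keyex : ∀ (M' : ℤ) (a' : Fin k → F), (∀ i, a' i ≠ 0 → deg i = M') →
      ∃ is : Fin k, (∑ m : Fin k, b m is • Xg m : A) ≠ 0 ∧ a' is = 0 := by
    intro M' a' ha'
    by_contra hc
    push_neg at hc
    have hc' : ∀ i : Fin k, (∑ m : Fin k, b m i • Xg m : A) ≠ 0 → a' i ≠ 0 := by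
      intro i hne
      exact hc i hne
    have hbex : ∃ i j, b i j ≠ 0 := by
      by_contra hb
      push_neg at hb
      apply hξne
      rw [hξ]
      apply Finset.sum_eq_zero
      intro i _
      apply Finset.sum_eq_zero
      intro j _
      rw [hb i j, zero_smul]
    obtain ⟨i, j, hb⟩ := hbex
    have hj : a' j ≠ 0 := hc' j (lin_ne_zero _ i hb)
    have hbji : b j i ≠ 0 := (hsupp i j).mp hb
    have hi : a' i ≠ 0 := hc' i (lin_ne_zero _ j hbji)
    have hdi := ha' i hi
    have hdj := ha' j hj
    have hij := hbdeg i j hb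
    exact (Int.not_odd_iff_even.mpr ⟨M', by omega⟩) hN
  intro n
  induction n using Nat.strong_induction_on with
  | _ n IH =>
    intro M' a' ha' hex w hwlen hmem
    obtain ⟨i0, hi0⟩ := hex
    set v : A := ∑ i : Fin k, a' i • Xg i with hv
    -- extract a representation of w * v
    rw [hI] at hmem
    obtain ⟨T, cco, gg, hrep⟩ := Submodule.mem_span_set'.mp hmem
    choose pp qq hpq using fun t : Fin T => (gg t).2
    set p' : Fin T → A := fun t => cco t • pp t with hp'
    have hrep' : w * v = ∑ t : Fin T, p' t * ξ * qq t := by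
      rw [← hrep]
      apply Finset.sum_congr rfl
      intro t _
      rw [hpq t, hp', smul_mul_assoc, smul_mul_assoc]
    set P : A := ∑ t : Fin T, ((qq t).coeff 1) • p' t with hP
    have hS : ∀ i : Fin k, (∑ t : Fin T, p' t * ξ * Dr i (qq t)) ∈ I := by
      intro i
      rw [hI]
      exact Submodule.sum_mem _ (fun t _ => Submodule.subset_span ⟨_, _, rfl⟩)
    have key : ∀ i : Fin k, a' i • w
        = (∑ t : Fin T, p' t * ξ * Dr i (qq t)) + P * (∑ m : Fin k, b m i • Xg m) := by
      intro i
      have hDv : Dr i v = a' i • (1 : A) := by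
        rw [hv, Dr_sum]
        simp only [Dr_smul, Dr_Xg]
        have h : ∀ j : Fin k, a' j • (if j = i then (1 : A) else 0)
            = if j = i then a' j • (1 : A) else 0 := by
          intro j; split <;> simp
        simp only [h]
        rw [Finset.sum_ite_eq' Finset.univ i (fun j => a' j • (1 : A))]
        simp
      have h1 : Dr i (w * v) = a' i • w := by
        rw [Dr_mul, hv, eval_lin_one, zero_smul, add_zero, ← hv, hDv, mul_smul_comm, mul_one]
      have h2 : Dr i (w * v)
          = (∑ t : Fin T, p' t * ξ * Dr i (qq t)) + P * (∑ m : Fin k, b m i • Xg m) := by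
        rw [hrep', Dr_sum]
        have hterm : ∀ t : Fin T, Dr i (p' t * ξ * qq t)
            = p' t * ξ * Dr i (qq t) + ((qq t).coeff 1) • (p' t * (∑ m : Fin k, b m i • Xg m)) := by
          intro t
          rw [Dr_mul, Dr_mul, hξ1, zero_smul, add_zero, hDξ]
        simp only [hterm]
        rw [Finset.sum_add_distrib]
        congr 1
        rw [hP, Finset.sum_mul]
        apply Finset.sum_congr rfl
        intro t _
        simp only [hp', smul_mul_assoc]
      rw [← h1, h2]
    obtain ⟨is, hξD, ha0⟩ := keyex M' a' ha'
    rcases n with _ | d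
    · -- base case: w is a scalar
      have hw1 : w = w.coeff 1 • (1 : A) := by
        classical
        ext l
        rw [MonoidAlgebra.coeff_smul, Finsupp.smul_apply, MonoidAlgebra.one_def,
          MonoidAlgebra.coeff_single, Finsupp.single_apply]
        rcases eq_or_ne (1 : W) l with rfl | hne
        · simp
        · rw [if_neg hne, smul_zero]
          rw [← Finsupp.notMem_support_iff]
          intro hmem'
          have := hwlen l hmem'
          rw [Nat.le_zero, FreeMonoid.length_eq_zero] at this
          exact hne this.symm
      rcases eq_or_ne (w.coeff 1) 0 with h0 | h0
      · rw [hw1, h0, zero_smul]; exact Submodule.zero_mem _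
      · exfalso
        have hvI : v ∈ I := by
          have heq : w * v = w.coeff 1 • v := by
            conv_lhs => rw [hw1]
            rw [smul_mul_assoc, one_mul]
          have hmem2 : w * v ∈ I := by rw [hI]; exact hmem
          rw [heq] at hmem2
          have := Submodule.smul_mem I (w.coeff 1)⁻¹ hmem2
          rwa [smul_smul, inv_mul_cancel₀ h0, one_smul] at this
        have := I_low hξ hI v hvI (FreeMonoid.of i0)
          (by rw [FreeMonoid.length_of]; omega)
        rw [hv, eval_lin_of] at this
        exact hi0 this
    · -- inductive step
      have hPmul : P * (∑ m : Fin k, b m is • Xg m) ∈ I := by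
        have hk := key is
        rw [ha0, zero_smul] at hk
        have : P * (∑ m : Fin k, b m is • Xg m)
            = -(∑ t : Fin T, p' t * ξ * Dr is (qq t)) := by
          rw [eq_neg_iff_add_eq_zero, add_comm]; exact hk.symm
        rw [this]
        exact Submodule.neg_mem _ (hS is)
      have hP'mul : truncL d P * (∑ m : Fin k, b m is • Xg m) ∈ I := by
        rw [← trunc_mul_lin d (lin_support _)]
        exact I_trunc hξ hI _ hPmul _
      have hP' : truncL d P ∈ I := by
        refine IH d (Nat.lt_succ_self d) (N - deg is) (fun m => b m is)
          (fun m hm => by have := hbdeg m is hm; omega)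
          (lin_exists_ne _ hξD) (truncL d P) support_truncL_le hP'mul
      have hsmul : a' i0 • w ∈ I := by
        have hk := key i0
        have htr := congrArg (truncL (d + 1)) hk
        rw [truncL_smul, truncL_eq_self hwlen, truncL_add,
          trunc_mul_lin d (lin_support _)] at htr
        rw [htr]
        exact Submodule.add_mem _ (I_trunc hξ hI _ (hS i0) _)
          (I_mul hI _ hP' _)
      have := Submodule.smul_mem I (a' i0)⁻¹ hsmul
      rwa [smul_smul, inv_mul_cancel₀ hi0, one_smul] at this

end mainthm

/-- Lemma LADJ: in the tensor algebra `T(V)` on homogeneous generators `x_1, …, x_k`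
(realized as the free algebra on `Fin k` with a degree function `deg`), let
`ξ = Σ_{|x_i|+|x_j|=N} b_{ij} x_i x_j` be a nonzero element of odd degree `N` with
`b i j ≠ 0 ↔ b j i ≠ 0`, let `I` be the two-sided ideal generated by `ξ` (the span of
all `a * ξ * c`), and let `u = Σ_{|x_i|=M} a_i x_i` be nonzero. Then for any `w`,
`w * u ∈ I ↔ w ∈ I`. -/
theorem right_multiplication_preserves_ideal_membership
    (F : Type*) [Field F] (k : ℕ)
    (deg : Fin k → ℤ) (N : ℤ) (hN : Odd N) (M : ℤ)
    (b : Fin k → Fin k → F)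
    (hsupp : ∀ i j, b i j ≠ 0 ↔ b j i ≠ 0)
    (hbdeg : ∀ i j, b i j ≠ 0 → deg i + deg j = N)
    (a : Fin k → F)
    (hadeg : ∀ i, a i ≠ 0 → deg i = M)
    (ξ u : FreeAlgebra F (Fin k))
    (hξ : ξ = ∑ i : Fin k, ∑ j : Fin k, b i j • (FreeAlgebra.ι F i * FreeAlgebra.ι F j))
    (hξne : ξ ≠ 0)
    (hu : u = ∑ i : Fin k, a i • FreeAlgebra.ι F i)
    (hune : u ≠ 0)
    (I : Submodule F (FreeAlgebra F (Fin k)))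
    (hI : I = Submodule.span F {x | ∃ v w : FreeAlgebra F (Fin k), x = v * ξ * w})
    (w : FreeAlgebra F (Fin k)) :
    w * u ∈ I ↔ w ∈ I := by
  set e := (FreeAlgebra.equivMonoidAlgebraFreeMonoid (R := F) (X := Fin k)) with he
  have heι : ∀ i : Fin k, e (FreeAlgebra.ι F i) = Xg i := by
    intro i
    rw [he, Xg, FreeAlgebra.equivMonoidAlgebraFreeMonoid]
    simp [FreeAlgebra.lift_ι_apply, MonoidAlgebra.of_apply]
  set I' : Submodule F (MonoidAlgebra F (FreeMonoid (Fin k))) := I.map e.toLinearMap with hI'def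
  have hmm : ∀ x : FreeAlgebra F (Fin k), x ∈ I ↔ e x ∈ I' := by
    intro x
    constructor
    · intro h; exact ⟨x, h, rfl⟩
    · rintro ⟨y, hy, hxy⟩
      have : y = x := e.injective hxy
      rwa [← this]
  have hI' : I' = Submodule.span F
      {x : MonoidAlgebra F (FreeMonoid (Fin k)) | ∃ v w, x = v * e ξ * w} := by
    rw [hI'def, hI, Submodule.map_span]
    congr 1
    ext x
    constructor
    · rintro ⟨y, ⟨v', w', rfl⟩, rfl⟩
      exact ⟨e v', e w', by simp [map_mul]⟩
    · rintro ⟨v', w', rfl⟩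
      refine ⟨e.symm v' * ξ * e.symm w', ⟨e.symm v', e.symm w', rfl⟩, ?_⟩
      simp [map_mul]
  have heξ : e ξ = ∑ i : Fin k, ∑ j : Fin k, b i j • (Xg i * Xg j) := by
    rw [hξ, map_sum]
    apply Finset.sum_congr rfl
    intro i _
    rw [map_sum]
    apply Finset.sum_congr rfl
    intro j _
    rw [map_smul, map_mul, heι, heι]
  have heξne : e ξ ≠ 0 := by
    intro h
    apply hξne
    have := congrArg e.symm h
    simpa using this
  have heu : e u = ∑ i : Fin k, a i • Xg i := by
    rw [hu, map_sum]
    apply Finset.sum_congr rfl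
    intro i _
    rw [map_smul, heι]
  have hane : ∃ i, a i ≠ 0 := by
    by_contra hc
    push_neg at hc
    apply hune
    rw [hu]
    exact Finset.sum_eq_zero (fun i _ => by rw [hc i, zero_smul])
  constructor
  · intro h
    have h' : e w * e u ∈ I' := by rw [← map_mul]; exact (hmm _).mp h
    have hmain := main_ma deg N hN b hsupp hbdeg (e ξ) heξ heξne I' hI'
      ((e w).coeff.support.sup FreeMonoid.length) M a hadeg hane (e w)
      (fun l hl => Finset.le_sup hl) (by rw [← heu]; exact h')
    exact (hmm w).mpr hmain
  · intro h
    have h' := I_mul hI' (e w) ((hmm w).mp h) (e u)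
    apply (hmm _).mpr
    rw [map_mul]
    exact h'
end

section
/- If β is a family of operations with β_r(y_i) = x_i for i ≤ k₁ and β_r(y_i) = 0 for all r when i > k₁, then applying Σ_t β_{s_t} (over the distinct values s_1<…<s_l of the r_i) to Σ_{i,j} a_{ij}[u_i, v_j] yields Σ_{j≤k₁, i} a_{ij}[u_i, u_j]; in the case n even, vanishing of this sum in the free algebra implies the matrix (a_{ij})_{i,j≤k₁} is symmetric and a_{ij} = 0 for i > k₁, j ≤ k₁ (Proposition P1, even case). -/
private lemma aux_hm (p : ℕ) [Fact p.Prime] {k : ℕ} (i₀ j₀ : Fin k) (hne : i₀ ≠ j₀)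
    (i j : Fin k) :
    (((if i = i₀ then !![1,0;0,0] else if i = j₀ then !![0,1;0,0] else 0) *
      (if j = i₀ then !![1,0;0,0] else if j = j₀ then !![0,1;0,0] else 0) -
      (if j = i₀ then !![1,0;0,0] else if j = j₀ then !![0,1;0,0] else 0) *
      (if i = i₀ then !![1,0;0,0] else if i = j₀ then !![0,1;0,0] else 0)) :
        Matrix (Fin 2) (Fin 2) (ZMod p)) 0 1
      = (if i = i₀ ∧ j = j₀ then 1 else if i = j₀ ∧ j = i₀ then -1 else 0) := by
  by_cases hi : i = i₀ <;> by_cases hi' : i = j₀ <;> by_cases hj : j = i₀ <;>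
    by_cases hj' : j = j₀ <;> simp_all [Matrix.mul_fin_two, Matrix.sub_apply]

private lemma aux_extract (p k k₁ : ℕ) [Fact p.Prime] (a : Fin k → Fin k → ZMod p)
    (hS : (∑ i : Fin k, ∑ j : Fin k,
        (if (j : ℕ) < k₁ then a i j •
          ((FreeAlgebra.ι (ZMod p) (Sum.inl i : Fin k ⊕ Fin k)) *
            FreeAlgebra.ι (ZMod p) (Sum.inl j) -
            FreeAlgebra.ι (ZMod p) (Sum.inl j) * FreeAlgebra.ι (ZMod p) (Sum.inl i))
          else 0)) = 0)
    (i₀ j₀ : Fin k) (hne : i₀ ≠ j₀) :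
    (if (j₀ : ℕ) < k₁ then a i₀ j₀ else 0) = (if (i₀ : ℕ) < k₁ then a j₀ i₀ else 0) := by
  set g : Fin k ⊕ Fin k → Matrix (Fin 2) (Fin 2) (ZMod p) := fun x =>
    if x = Sum.inl i₀ then !![1,0;0,0] else if x = Sum.inl j₀ then !![0,1;0,0] else 0 with hg
  have gval : ∀ x : Fin k, g (Sum.inl x)
      = if x = i₀ then !![1,0;0,0] else if x = j₀ then !![0,1;0,0] else 0 := by
    intro x; simp [hg, Sum.inl.injEq]
  have hφ := congrArg (FreeAlgebra.lift (ZMod p) g) hS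
  simp only [map_sum, map_zero, apply_ite (FreeAlgebra.lift (ZMod p) g), map_smul, map_sub,
    map_mul, FreeAlgebra.lift_ι_apply] at hφ
  have hm : ∀ i j : Fin k,
      ((g (Sum.inl i) * g (Sum.inl j) - g (Sum.inl j) * g (Sum.inl i)) :
        Matrix (Fin 2) (Fin 2) (ZMod p)) 0 1
      = (if i = i₀ ∧ j = j₀ then 1 else if i = j₀ ∧ j = i₀ then -1 else 0) := by
    intro i j
    rw [gval, gval]
    exact aux_hm p i₀ j₀ hne i j
  have hφ01 := congrArg (fun M : Matrix (Fin 2) (Fin 2) (ZMod p) => M 0 1) hφ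
  simp only [Matrix.sum_apply, Matrix.zero_apply, Matrix.smul_apply,
    apply_ite (fun M : Matrix (Fin 2) (Fin 2) (ZMod p) => M 0 1), hm, smul_eq_mul] at hφ01
  rw [← Finset.sum_product'] at hφ01
  rw [Finset.sum_eq_add_of_mem (i₀, j₀) (j₀, i₀) (by simp) (by simp)
    (by simp [hne]) ?h0] at hφ01
  case h0 =>
    rintro ⟨i, j⟩ _ ⟨hc1, hc2⟩
    have h1 : ¬(i = i₀ ∧ j = j₀) := by rintro ⟨rfl, rfl⟩; exact hc1 rfl
    have h2 : ¬(i = j₀ ∧ j = i₀) := by rintro ⟨rfl, rfl⟩; exact hc2 rfl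
    simp [h1, h2]
  simp only [Ne.symm hne, hne, and_true, and_false, if_true, if_false, true_and,
    if_neg] at hφ01
  clear hφ hm gval hS
  clear_value g
  clear hg g
  split_ifs at hφ01 ⊢ <;>
    first
      | rfl
      | linear_combination hφ01
      | linear_combination -hφ01

/-- Derivation property forces symmetry constraints (Proposition P1, even case).
Work in the free algebra on generators `u_1,…,u_k` (degree `n-2`, even) and
`v_1,…,v_k` (degree `n-1`, odd), over a field of odd characteristic `p`. Let `β` be a
linear map behaving as a graded derivation of degree `-1` with `β(u_i) = 0`,
`β(v_i) = u_i` for `i < k₁` and `β(v_i) = 0` for `i ≥ k₁`; the graded Leibniz rule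
(with the relevant signs: `|u_i|` even, `|v_j|` odd, `β(u_i)=0`) gives
`β(u_i v_j) = u_i β(v_j)` and `β(v_j u_i) = β(v_j) u_i`, and `[u_i,v_j] = u_iv_j - v_ju_i`.
If `β(Σ a_{ij}[u_i, v_j]) = 0` then `Σ_{j<k₁} a_{ij}[u_i,u_j] = 0`, and hence
`a_{ij} = a_{ji}` for `i,j < k₁` and `a_{ij} = 0` for `i ≥ k₁`, `j < k₁`. -/
theorem bockstein_forces_symmetry
    (p : ℕ) [Fact p.Prime] (hodd : Odd p)
    (n k k₁ : ℕ) (hn : Even n) (hk₁ : k₁ ≤ k)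
    (β : FreeAlgebra (ZMod p) (Fin k ⊕ Fin k) →ₗ[ZMod p] FreeAlgebra (ZMod p) (Fin k ⊕ Fin k))
    (u v : Fin k → FreeAlgebra (ZMod p) (Fin k ⊕ Fin k))
    (hu : ∀ i, u i = FreeAlgebra.ι (ZMod p) (Sum.inl i))
    (hv : ∀ i, v i = FreeAlgebra.ι (ZMod p) (Sum.inr i))
    (hβu : ∀ i, β (u i) = 0)
    (hβv : ∀ j : Fin k, β (v j) = if (j : ℕ) < k₁ then u j else 0)
    (hLeib₁ : ∀ i j, β (u i * v j) = u i * β (v j))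
    (hLeib₂ : ∀ i j, β (v j * u i) = β (v j) * u i)
    (a : Fin k → Fin k → ZMod p)
    (hzero : β (∑ i : Fin k, ∑ j : Fin k, a i j • (u i * v j - v j * u i)) = 0) :
    (∑ i : Fin k, ∑ j : Fin k,
        (if (j : ℕ) < k₁ then a i j • (u i * u j - u j * u i) else 0)) = 0 ∧
    (∀ i j : Fin k, (i : ℕ) < k₁ → (j : ℕ) < k₁ → a i j = a j i) ∧
    (∀ i j : Fin k, k₁ ≤ (i : ℕ) → (j : ℕ) < k₁ → a i j = 0) := by
  have h1 : ∀ i j : Fin k, β (a i j • (u i * v j - v j * u i))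
      = if (j : ℕ) < k₁ then a i j • (u i * u j - u j * u i) else 0 := by
    intro i j
    rw [map_smul, map_sub, hLeib₁, hLeib₂, hβv]
    split <;> simp
  have hS : (∑ i : Fin k, ∑ j : Fin k,
      (if (j : ℕ) < k₁ then a i j • (u i * u j - u j * u i) else 0)) = 0 := by
    simp only [map_sum, h1] at hzero
    exact hzero
  have hS' : (∑ i : Fin k, ∑ j : Fin k,
      (if (j : ℕ) < k₁ then a i j •
        ((FreeAlgebra.ι (ZMod p) (Sum.inl i : Fin k ⊕ Fin k)) *
          FreeAlgebra.ι (ZMod p) (Sum.inl j) -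
          FreeAlgebra.ι (ZMod p) (Sum.inl j) * FreeAlgebra.ι (ZMod p) (Sum.inl i))
        else 0)) = 0 := by
    simpa only [hu] using hS
  refine ⟨hS, ?_, ?_⟩
  · intro i j hi hj
    rcases eq_or_ne i j with rfl | hne
    · rfl
    · have := aux_extract p k k₁ a hS' i j hne
      simpa [hi, hj] using this
  · intro i j hik hj
    have hne : i ≠ j := by
      intro h; rw [h] at hik; omega
    have := aux_extract p k k₁ a hS' i j hne
    simpa [hj, Nat.not_lt.mpr hik] using this
end
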